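/- Let A be a monotone operator on a real Hilbert space H. If (u₁, v₁), (u₂, v₂) ∈ A and λ, μ > 0, then (λ + μ)‖u₁ − u₂‖ ≤ λ‖u₂ + μv₂ − u₁‖ + μ‖u₁ + λv₁ − u₂‖. -/

import Mathlib

open RealInnerProductSpace

/-- An operator (identified with its graph) is monotone. -/
def MonotoneOp {H : Type*} [NormedAddCommGroup H] [InnerProductSpace ℝ H]
    (A : Set (H × H)) : Prop :=
  ∀ p ∈ A, ∀ q ∈ A, (0:ℝ) ≤ ⟪p.2 - q.2, p.1 - q.1⟫

/-- if `(u₁, v₁), (u₂, v₂) ∈ A` with `A` monotone and `λ, μ > 0`, then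
`(λ + μ)‖u₁ − u₂‖ ≤ λ‖u₂ + μv₂ − u₁‖ + μ‖u₁ + λv₁ − u₂‖`. -/
theorem stmt6 {H : Type*} [NormedAddCommGroup H] [InnerProductSpace ℝ H] [CompleteSpace H]
    (A : Set (H × H)) (hmono : MonotoneOp A)
    (u₁ v₁ u₂ v₂ : H) (h₁ : (u₁, v₁) ∈ A) (h₂ : (u₂, v₂) ∈ A)
    (lam mu : ℝ) (hlam : 0 < lam) (hmu : 0 < mu) :
    (lam + mu) * ‖u₁ - u₂‖ ≤
      lam * ‖u₂ + mu • v₂ - u₁‖ + mu * ‖u₁ + lam • v₁ - u₂‖ := by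
  by_cases hne : u₁ = u₂
  · simp [hne]
    positivity
  have hnorm : 0 < ‖u₁ - u₂‖ := by
    simpa [sub_eq_zero] using norm_sub_pos_iff.2 hne
  have hm : (0:ℝ) ≤ ⟪v₁ - v₂, u₁ - u₂⟫ := hmono _ h₁ _ h₂
  have cs1 : ⟪u₂ + mu • v₂ - u₁, u₂ - u₁⟫ ≤ ‖u₂ + mu • v₂ - u₁‖ * ‖u₁ - u₂‖ := by
    calc ⟪u₂ + mu • v₂ - u₁, u₂ - u₁⟫ ≤ ‖u₂ + mu • v₂ - u₁‖ * ‖u₂ - u₁‖ :=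
          real_inner_le_norm _ _
      _ = ‖u₂ + mu • v₂ - u₁‖ * ‖u₁ - u₂‖ := by rw [norm_sub_rev u₂ u₁]
  have cs2 : ⟪u₁ + lam • v₁ - u₂, u₁ - u₂⟫ ≤ ‖u₁ + lam • v₁ - u₂‖ * ‖u₁ - u₂‖ :=
    real_inner_le_norm _ _
  have key : (lam + mu) * (‖u₁ - u₂‖ * ‖u₁ - u₂‖) ≤
      (lam * ‖u₂ + mu • v₂ - u₁‖ + mu * ‖u₁ + lam • v₁ - u₂‖) * ‖u₁ - u₂‖ := by
    have expand : lam * ⟪u₂ + mu • v₂ - u₁, u₂ - u₁⟫ + mu * ⟪u₁ + lam • v₁ - u₂, u₁ - u₂⟫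
        = (lam + mu) * ⟪u₁ - u₂, u₁ - u₂⟫ + lam * mu * ⟪v₁ - v₂, u₁ - u₂⟫ := by
      simp only [inner_sub_left, inner_add_left, inner_sub_right, real_inner_smul_left,
        real_inner_comm u₂ u₁]
      ring
    have hsq : ⟪u₁ - u₂, u₁ - u₂⟫ = ‖u₁ - u₂‖ * ‖u₁ - u₂‖ := real_inner_self_eq_norm_mul_norm _
    nlinarith [mul_le_mul_of_nonneg_left cs1 hlam.le, mul_le_mul_of_nonneg_left cs2 hmu.le,
      mul_nonneg (mul_nonneg hlam.le hmu.le) hm]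
  have := (mul_le_mul_iff_of_pos_right hnorm).1 (by linarith [key] : (lam + mu) * ‖u₁ - u₂‖ * ‖u₁ - u₂‖ ≤
      (lam * ‖u₂ + mu • v₂ - u₁‖ + mu * ‖u₁ + lam • v₁ - u₂‖) * ‖u₁ - u₂‖)
  linarith
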